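/- Let $n\ge 2$, $\tau>1$, let $Q$ be an $\mathbb{N}^*\setminus Q$-free set with $Q\neq\mathbb{N}^*$, let $v\in\mathbb{N}^*\setminus Q$ and $u\in\mathbb{N}^*$ coprime to $v$, and let $A=(a_1,\dots,a_n)\in\mathbb{N}^n\setminus\{0\}$. Then $\Gamma_n(A,u,v)\cap W_{\tau,n} \subseteq W^*_{\tau,n}(Q)$, where $\Gamma_n(A,u,v)=\{x\in\mathbb{R}^n : \sum_i a_i x_i = u/v\}$. -/

import Mathlib

theorem hyperplane_slice_subset_liminf_set
    (n : ℕ) (hn : 2 ≤ n) (τ : ℝ) (hτ : 1 < τ)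
    (Q : Set ℕ) (hQpos : ∀ q ∈ Q, 0 < q)
    (hfree : ∀ q : ℕ, 0 < q → (q ∈ Q ↔ ∀ w : ℕ, 0 < w → w ∉ Q → ¬ w ∣ q))
    (hne : Q ≠ {q : ℕ | 0 < q})
    (u v : ℕ) (hu : 0 < u) (hv : 0 < v) (hvQ : v ∉ Q) (huv : Nat.Coprime u v)
    (a : Fin n → ℕ) (ha : a ≠ 0)
    (W WQ : Set (Fin n → ℝ))
    (hW : W = {x : Fin n → ℝ |
      {q : ℕ | 0 < q ∧ ∃ p : Fin n → ℤ,
        ∀ i, |x i - (p i : ℝ) / (q : ℝ)| < 1 / (q : ℝ) ^ τ}.Infinite})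
    (hWQ : WQ = {x : Fin n → ℝ |
      {q : ℕ | q ∈ Q ∧ ∃ p : Fin n → ℤ,
        ∀ i, |x i - (p i : ℝ) / (q : ℝ)| < 1 / (q : ℝ) ^ τ}.Infinite}) :
    {x : Fin n → ℝ | ∑ i, (a i : ℝ) * x i = (u : ℝ) / (v : ℝ)} ∩ W ⊆ W \ WQ := by
  rintro x ⟨hplane, hxW⟩
  refine ⟨hxW, ?_⟩
  subst hWQ
  simp only [Set.mem_setOf_eq] at hplane ⊢
  intro hinf
  set C : ℝ := (v:ℝ) * ∑ i, (a i : ℝ) with hC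
  have htend : Filter.Tendsto (fun q : ℕ => (q:ℝ)^(τ-1)) Filter.atTop Filter.atTop :=
    (tendsto_rpow_atTop (by linarith)).comp tendsto_natCast_atTop_atTop
  obtain ⟨N, hN⟩ := Filter.eventually_atTop.mp (htend.eventually_gt_atTop C)
  apply hinf
  apply Set.Finite.subset (Set.finite_Iio N)
  rintro q ⟨hqQ, p, hp⟩
  simp only [Set.mem_Iio]
  by_contra hlt
  push_neg at hlt
  have hq0 : 0 < q := hQpos q hqQ
  have hqR : (0:ℝ) < (q:ℝ) := by exact_mod_cast hq0
  have hqτ : (0:ℝ) < (q:ℝ)^τ := Real.rpow_pos_of_pos hqR τ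
  have hpow : (0:ℝ) < (q:ℝ)^(τ-1) := Real.rpow_pos_of_pos hqR _
  set P : ℤ := ∑ i, (a i : ℤ) * p i with hP
  have h1 : (u:ℝ)/v - (P:ℝ)/q = ∑ i, (a i:ℝ) * (x i - (p i : ℝ)/q) := by
    have hPq : (P:ℝ)/q = ∑ i, (a i : ℝ) * ((p i : ℝ)/q) := by
      rw [hP]; push_cast; rw [Finset.sum_div]
      refine Finset.sum_congr rfl fun i _ => by ring
    rw [← hplane, hPq, ← Finset.sum_sub_distrib]
    refine Finset.sum_congr rfl fun i _ => by ring
  have h2 : |(u:ℝ)/v - (P:ℝ)/q| ≤ (∑ i, (a i:ℝ)) / (q:ℝ)^τ := by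
    rw [h1, Finset.sum_div]
    refine (Finset.abs_sum_le_sum_abs _ _).trans (Finset.sum_le_sum ?_)
    intro i _
    rw [abs_mul, abs_of_nonneg (by positivity : (0:ℝ) ≤ (a i:ℝ))]
    calc (a i:ℝ) * |x i - (p i:ℝ) / q| ≤ (a i:ℝ) * (1/(q:ℝ)^τ) :=
          mul_le_mul_of_nonneg_left (hp i).le (by positivity)
      _ = (a i:ℝ)/(q:ℝ)^τ := by ring
  have h3 : |(((u:ℤ)*q - v*P : ℤ) : ℝ)| < 1 := by
    have heq : (((u:ℤ)*q - v*P : ℤ) : ℝ) = (v:ℝ)*q * ((u:ℝ)/v - (P:ℝ)/q) := by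
      push_cast
      field_simp
    rw [heq, abs_mul, abs_of_nonneg (by positivity : (0:ℝ) ≤ (v:ℝ)*(q:ℝ))]
    have hb : (v:ℝ)*q * |(u:ℝ)/v - (P:ℝ)/q| ≤ (v:ℝ)*q*((∑ i, (a i:ℝ)) / (q:ℝ)^τ) :=
      mul_le_mul_of_nonneg_left h2 (by positivity)
    refine hb.trans_lt ?_
    have hrw : (q:ℝ)^τ = (q:ℝ) * (q:ℝ)^(τ-1) := by
      nth_rewrite 2 [← Real.rpow_one (q:ℝ)]
      rw [← Real.rpow_add hqR]
      ring_nf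
    rw [hrw]
    calc (v:ℝ)*q*((∑ i, (a i:ℝ))/((q:ℝ)*(q:ℝ)^(τ-1))) = C / (q:ℝ)^(τ-1) := by
          rw [hC]; field_simp
      _ < 1 := (div_lt_one hpow).mpr (hN q hlt)
  have hz : (u:ℤ)*q - v*P = 0 := by
    have habs : |(u:ℤ)*q - v*P| < 1 := by exact_mod_cast h3
    rw [abs_lt] at habs
    omega
  have hdvd : v ∣ q := by
    have heq : (u:ℤ)*q = v*P := by omega
    have hnat : u*q = v * P.natAbs := by
      have h := congrArg Int.natAbs heq
      simpa [Int.natAbs_mul] using h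
    exact Nat.Coprime.dvd_of_dvd_mul_left huv.symm ⟨P.natAbs, hnat⟩
  exact (hfree q hq0).mp hqQ v hv hvQ hdvd
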